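/- Suppose the sequence g^t = (β^t, z^t, u^t), with z^t ∈ Z_r for all t, satisfies the PPA variational inequality with a symmetric positive definite matrix H, and assume a saddle point g* exists. Then Σ_{t=0}^{∞} ‖g^{t+1} − g^t‖_H² ≤ ‖g^0 − g*‖_H²; consequently ‖g^t − g^{t+1}‖_H → 0 as t → ∞ and the sequence {g^t} is bounded. -/

import Mathlib

open Matrix Filter

noncomputable section

/-- Vectors in ℝ^p. -/
abbrev Vec (p : ℕ) := Fin p → ℝ

/-- Triples `g = (β, z, u) ∈ ℝ^p × ℝ^p × ℝ^p`. -/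
abbrev Trip (p : ℕ) := Vec p × Vec p × Vec p

/-- Index type for ℝ^{3p}. -/
abbrev Idx3 (p : ℕ) := Fin p ⊕ Fin p ⊕ Fin p

/-- Identify a triple `(β, z, u)` with a vector in ℝ^{3p}. -/
def toSum {p : ℕ} (g : Trip p) : Idx3 p → ℝ := Sum.elim g.1 (Sum.elim g.2.1 g.2.2)

/-- The operator `F(β, z, u) = (−Aᵀu, u, Aβ − z − c)`. -/
def Fop {p : ℕ} (A : Matrix (Fin p) (Fin p) ℝ) (c : Vec p) (g : Trip p) : Trip p :=
  (-(Aᵀ *ᵥ g.2.2), g.2.2, A *ᵥ g.1 - g.2.1 - c)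

/-- Membership in the box `Z_r = {z : ‖z‖_∞ ≤ r}`. -/
def inZ {p : ℕ} (r : ℝ) (z : Vec p) : Prop := ∀ j, |z j| ≤ r

/-- The ℓ₁ norm on ℝ^p. -/
def l1 {p : ℕ} (β : Vec p) : ℝ := ∑ j, |β j|

/-- The Euclidean inner product on ℝ^{3p}. -/
def ip {p : ℕ} (v w : Trip p) : ℝ := toSum v ⬝ᵥ toSum w

/-- The bilinear form `⟨v, H w⟩` on ℝ^{3p}; in particular `ipH H v v = ‖v‖_H²`. -/
def ipH {p : ℕ} (H : Matrix (Idx3 p) (Idx3 p) ℝ) (v w : Trip p) : ℝ :=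
  toSum v ⬝ᵥ (H *ᵥ toSum w)

/-- `g* = (β*, z*, u*)` is a saddle point: `z* ∈ Z_r` and
`‖β‖₁ − ‖β*‖₁ + ⟨g − g*, F(g*)⟩ ≥ 0` for all `g = (β, z, u)` with `z ∈ Z_r`. -/
def IsSaddle {p : ℕ} (A : Matrix (Fin p) (Fin p) ℝ) (c : Vec p) (r : ℝ)
    (gs : Trip p) : Prop :=
  inZ r gs.2.1 ∧ ∀ g : Trip p, inZ r g.2.1 →
    0 ≤ l1 g.1 - l1 gs.1 + ip (g - gs) (Fop A c gs)

/-- The sequence `g^t` satisfies the PPA variational inequality with matrix `H`: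
for every `t` and every `g = (β, z, u)` with `z ∈ Z_r`,
`‖β‖₁ − ‖β^{t+1}‖₁ + ⟨g − g^{t+1}, F(g^{t+1})⟩ ≥ ⟨g − g^{t+1}, H(g^t − g^{t+1})⟩`. -/
def SatisfiesPVI {p : ℕ} (A : Matrix (Fin p) (Fin p) ℝ) (c : Vec p) (r : ℝ)
    (H : Matrix (Idx3 p) (Idx3 p) ℝ) (g : ℕ → Trip p) : Prop :=
  ∀ t : ℕ, ∀ gg : Trip p, inZ r gg.2.1 →
    ipH H (gg - g (t + 1)) (g t - g (t + 1)) ≤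
      l1 gg.1 - l1 (g (t + 1)).1 + ip (gg - g (t + 1)) (Fop A c (g (t + 1)))


section aux

variable {p : ℕ}

lemma toSum_sub (a b : Trip p) : toSum (a - b) = toSum a - toSum b := by
  funext i
  cases i with
  | inl i => rfl
  | inr i => cases i <;> rfl

lemma toSum_neg (a : Trip p) : toSum (-a) = -toSum a := by
  funext i
  cases i with
  | inl i => rfl
  | inr i => cases i <;> rfl

lemma ip_eq (v w : Trip p) :
    ip v w = v.1 ⬝ᵥ w.1 + v.2.1 ⬝ᵥ w.2.1 + v.2.2 ⬝ᵥ w.2.2 := by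
  simp [ip, toSum, dotProduct, Fintype.sum_sum_type]
  ring

lemma ip_sub_right (v a b : Trip p) : ip v (a - b) = ip v a - ip v b := by
  simp [ip, toSum_sub, dotProduct_sub]

lemma ip_neg_left (v w : Trip p) : ip (-v) w = -ip v w := by
  simp [ip, toSum_neg, neg_dotProduct]

lemma key_dot (A : Matrix (Fin p) (Fin p) ℝ) (a b : Vec p) :
    a ⬝ᵥ (Aᵀ *ᵥ b) = b ⬝ᵥ (A *ᵥ a) := by
  rw [dotProduct_mulVec, vecMul_transpose, dotProduct_comm]

/-- Skew-symmetry of the linear part of `F`. -/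
lemma ip_skew (A : Matrix (Fin p) (Fin p) ℝ) (d : Trip p) :
    ip d (-(Aᵀ *ᵥ d.2.2), d.2.2, A *ᵥ d.1 - d.2.1) = 0 := by
  rw [ip_eq]
  simp only [dotProduct_neg, dotProduct_sub]
  have h1 := key_dot A d.1 d.2.2
  have h2 := dotProduct_comm d.2.1 d.2.2
  linarith

lemma Fop_sub (A : Matrix (Fin p) (Fin p) ℝ) (c : Vec p) (x y : Trip p) :
    Fop A c x - Fop A c y
      = (-(Aᵀ *ᵥ ((x - y).2.2)), (x - y).2.2, A *ᵥ (x - y).1 - (x - y).2.1) := by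
  simp only [Fop, Prod.mk_sub_mk, Prod.fst_sub, Prod.snd_sub, Matrix.mulVec_sub]
  refine Prod.ext ?_ (Prod.ext ?_ ?_) <;> simp <;> abel

/-- Monotonicity ("F is affine with skew linear part"). -/
lemma ip_F_eq (A : Matrix (Fin p) (Fin p) ℝ) (c : Vec p) (x y : Trip p) :
    ip (x - y) (Fop A c x) = ip (x - y) (Fop A c y) := by
  have h : ip (x - y) (Fop A c x) - ip (x - y) (Fop A c y) = 0 := by
    rw [← ip_sub_right, Fop_sub, ip_skew]
  linarith

variable (H : Matrix (Idx3 p) (Idx3 p) ℝ)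

lemma ipH_nonneg (hH : H.PosDef) (v : Trip p) : 0 ≤ ipH H v v := by
  simpa [ipH] using hH.posSemidef.dotProduct_mulVec_nonneg (toSum v)

lemma dot_symm (hH : H.PosDef) (x y : Idx3 p → ℝ) :
    x ⬝ᵥ (H *ᵥ y) = y ⬝ᵥ (H *ᵥ x) := by
  have hs : Hᵀ = H := by
    have := hH.1
    simpa [Matrix.IsHermitian, Matrix.conjTranspose_eq_transpose_of_trivial] using this
  calc x ⬝ᵥ (H *ᵥ y) = (x ᵥ* H) ⬝ᵥ y := dotProduct_mulVec x H y
    _ = (Hᵀ *ᵥ x) ⬝ᵥ y := by rw [Matrix.mulVec_transpose]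
    _ = (H *ᵥ x) ⬝ᵥ y := by rw [hs]
    _ = y ⬝ᵥ (H *ᵥ x) := dotProduct_comm _ _

lemma quad_id (hH : H.PosDef) (x y : Idx3 p → ℝ) :
    x ⬝ᵥ (H *ᵥ x)
      = y ⬝ᵥ (H *ᵥ y) + (x - y) ⬝ᵥ (H *ᵥ (x - y)) + 2 * (y ⬝ᵥ (H *ᵥ (x - y))) := by
  have h := dot_symm H hH x y
  simp only [Matrix.mulVec_sub, dotProduct_sub, sub_dotProduct]
  linarith

lemma ipH_neg_neg (v : Trip p) : ipH H (-v) (-v) = ipH H v v := by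
  simp [ipH, toSum_neg, Matrix.mulVec_neg, dotProduct_neg, neg_dotProduct]

end aux

/-- Summability of successive differences: `Σ_{t=0}^∞ ‖g^{t+1} − g^t‖_H² ≤ ‖g^0 − g*‖_H²`;
consequently `‖g^t − g^{t+1}‖_H → 0` and the sequence `{g^t}` is bounded. -/
theorem stmt10 {p : ℕ} (A : Matrix (Fin p) (Fin p) ℝ) (c : Vec p) (r : ℝ) (hr : 0 ≤ r)
    (H : Matrix (Idx3 p) (Idx3 p) ℝ) (hH : H.PosDef)
    (g : ℕ → Trip p) (hz : ∀ t, inZ r (g t).2.1)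
    (hPVI : SatisfiesPVI A c r H g)
    (gs : Trip p) (hgs : IsSaddle A c r gs) :
    Summable (fun t : ℕ => ipH H (g (t + 1) - g t) (g (t + 1) - g t)) ∧
    (∑' t : ℕ, ipH H (g (t + 1) - g t) (g (t + 1) - g t)) ≤ ipH H (g 0 - gs) (g 0 - gs) ∧
    Tendsto (fun t : ℕ => Real.sqrt (ipH H (g t - g (t + 1)) (g t - g (t + 1))))
      atTop (nhds 0) ∧
    Bornology.IsBounded (Set.range fun t : ℕ => toSum (g t)) := by
  classical
  -- notation
  set φ : ℕ → ℝ := fun t => ipH H (g t - gs) (g t - gs) with hφ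
  set d : ℕ → ℝ := fun t => ipH H (g t - g (t + 1)) (g t - g (t + 1)) with hd
  -- the cross term is nonnegative
  have hcross : ∀ t : ℕ, ipH H (gs - g (t + 1)) (g t - g (t + 1)) ≤ 0 := by
    intro t
    have h1 := hPVI t gs hgs.1
    have h2 := hgs.2 (g (t + 1)) (hz (t + 1))
    have h3 : ip (g (t + 1) - gs) (Fop A c (g (t + 1)))
        = ip (g (t + 1) - gs) (Fop A c gs) := ip_F_eq A c _ _
    have h4 : ip (gs - g (t + 1)) (Fop A c (g (t + 1)))
        = -ip (g (t + 1) - gs) (Fop A c (g (t + 1))) := by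
      rw [← ip_neg_left, neg_sub]
    linarith
  -- key contraction inequality
  have hkey : ∀ t : ℕ, φ (t + 1) + d t ≤ φ t := by
    intro t
    have hq := quad_id H hH (toSum (g t) - toSum gs) (toSum (g (t + 1)) - toSum gs)
    have e1 : toSum (g t) - toSum gs = toSum (g t - gs) := (toSum_sub _ _).symm
    have e2 : toSum (g (t + 1)) - toSum gs = toSum (g (t + 1) - gs) := (toSum_sub _ _).symm
    have e3 : (toSum (g t) - toSum gs) - (toSum (g (t + 1)) - toSum gs)
        = toSum (g t - g (t + 1)) := by rw [toSum_sub]; abel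
    rw [e3] at hq
    rw [e1, e2] at hq
    have hc : toSum (g (t + 1) - gs) ⬝ᵥ (H *ᵥ toSum (g t - g (t + 1)))
        = -ipH H (gs - g (t + 1)) (g t - g (t + 1)) := by
      have e : toSum (gs - g (t + 1)) = -(toSum (g (t + 1) - gs)) := by
        rw [← toSum_neg]; congr 1; abel
      simp only [ipH, e, neg_dotProduct, neg_neg]
    have hc' := hcross t
    have hφt : φ t = toSum (g t - gs) ⬝ᵥ (H *ᵥ toSum (g t - gs)) := rfl
    have hφt1 : φ (t + 1) = toSum (g (t + 1) - gs) ⬝ᵥ (H *ᵥ toSum (g (t + 1) - gs)) := rfl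
    have hdt : d t = toSum (g t - g (t + 1)) ⬝ᵥ (H *ᵥ toSum (g t - g (t + 1))) := rfl
    rw [hc] at hq
    rw [hφt, hφt1, hdt]
    linarith
  have hdnn : ∀ t, 0 ≤ d t := fun t => ipH_nonneg H hH _
  have hφnn : ∀ t, 0 ≤ φ t := fun t => ipH_nonneg H hH _
  -- partial sums
  have hsum : ∀ n : ℕ, ∑ i ∈ Finset.range n, d i ≤ φ 0 - φ n := by
    intro n
    induction n with
    | zero => simp
    | succ n ih =>
      rw [Finset.sum_range_succ]
      have := hkey n
      linarith
  have hsum' : ∀ n : ℕ, ∑ i ∈ Finset.range n, d i ≤ φ 0 := fun n => by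
    have := hφnn n; linarith [hsum n]
  -- the statement's summand equals d
  have hdeq : (fun t : ℕ => ipH H (g (t + 1) - g t) (g (t + 1) - g t)) = d := by
    funext t
    have : g (t + 1) - g t = -(g t - g (t + 1)) := by abel
    rw [this, ipH_neg_neg]
  have hSummable : Summable (fun t : ℕ => ipH H (g (t + 1) - g t) (g (t + 1) - g t)) := by
    rw [hdeq]; exact summable_of_sum_range_le hdnn hsum'
  have hφ0 : φ 0 = ipH H (g 0 - gs) (g 0 - gs) := rfl
  refine ⟨hSummable, ?_, ?_, ?_⟩
  · rw [hdeq]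
    exact Real.tsum_le_of_sum_range_le hdnn hsum'
  · have h0 : Tendsto d atTop (nhds 0) := by
      rw [← hdeq]
      exact hSummable.tendsto_atTop_zero
    have := h0.sqrt
    simpa using this
  · -- boundedness
    rw [isBounded_iff_forall_norm_le]
    by_cases hp : p = 0
    · subst hp
      refine ⟨‖toSum (g 0)‖, ?_⟩
      rintro x ⟨t, rfl⟩
      have : toSum (g t) = toSum (g 0) := Subsingleton.elim _ _
      show ‖toSum (g t)‖ ≤ ‖toSum (g 0)‖
      rw [this]
    · -- positive definiteness gives a uniform lower bound on the sphere
      haveI : Nonempty (Idx3 p) := ⟨Sum.inl ⟨0, Nat.pos_of_ne_zero hp⟩⟩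
      set f : (Idx3 p → ℝ) → ℝ := fun v => v ⬝ᵥ (H *ᵥ v) with hf
      have hfc : Continuous f :=
        continuous_id.dotProduct (continuous_const.matrix_mulVec continuous_id)
      have hKc : IsCompact (Metric.sphere (0 : Idx3 p → ℝ) 1) := isCompact_sphere 0 1
      have hKne : (Metric.sphere (0 : Idx3 p → ℝ) 1).Nonempty := by
        refine ⟨fun _ => 1, ?_⟩
        simp
      obtain ⟨w, hwK, hw⟩ := hKc.exists_isMinOn hKne hfc.continuousOn
      have hwn : ‖w‖ = 1 := by simpa using hwK
      have hwne : w ≠ 0 := by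
        intro h; rw [h] at hwn; simp at hwn
      set ε : ℝ := f w with hε
      have hεpos : 0 < ε := by
        have := hH.dotProduct_mulVec_pos hwne
        simpa [hε, hf] using this
      have hlb : ∀ v : Idx3 p → ℝ, ε * ‖v‖ ^ 2 ≤ f v := by
        intro v
        by_cases hv : v = 0
        · subst hv; simp [hf]
        · have hn : (0 : ℝ) < ‖v‖ := norm_pos_iff.2 hv
          set w' : Idx3 p → ℝ := ‖v‖⁻¹ • v with hw'
          have hw'K : w' ∈ Metric.sphere (0 : Idx3 p → ℝ) 1 := by
            simp [hw', norm_smul, abs_of_pos (inv_pos.2 hn), inv_mul_cancel₀ hn.ne']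
          have hεw : ε ≤ f w' := hw hw'K
          have hfs : f w' = ‖v‖⁻¹ ^ 2 * f v := by
            simp only [hf, hw', Matrix.mulVec_smul, smul_dotProduct, dotProduct_smul,
              smul_eq_mul]
            ring
          rw [hfs] at hεw
          have h2 : (0 : ℝ) < ‖v‖ ^ 2 := by positivity
          calc ε * ‖v‖ ^ 2 ≤ (‖v‖⁻¹ ^ 2 * f v) * ‖v‖ ^ 2 := by nlinarith
            _ = f v := by field_simp
      -- uniform bound on ‖toSum (g t) - toSum gs‖
      refine ⟨‖toSum gs‖ + Real.sqrt (φ 0 / ε), ?_⟩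
      rintro x ⟨t, rfl⟩
      have hφt0 : φ t ≤ φ 0 := by
        have := hsum t
        have hs := Finset.sum_nonneg (fun i (_ : i ∈ Finset.range t) => hdnn i)
        linarith
      have hfx : f (toSum (g t) - toSum gs) = φ t := by
        rw [← toSum_sub]; rfl
      have h1 : ε * ‖toSum (g t) - toSum gs‖ ^ 2 ≤ φ 0 := by
        have := hlb (toSum (g t) - toSum gs)
        rw [hfx] at this
        linarith
      have h2 : ‖toSum (g t) - toSum gs‖ ^ 2 ≤ φ 0 / ε := by
        rw [le_div_iff₀ hεpos]; linarith
      have h3 : ‖toSum (g t) - toSum gs‖ ≤ Real.sqrt (φ 0 / ε) := by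
        have := Real.sqrt_le_sqrt h2
        rwa [Real.sqrt_sq (norm_nonneg _)] at this
      have h4 := norm_sub_norm_le (toSum (g t)) (toSum gs)
      linarith
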